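/- If a cut (V0, V1) of a connected graph G is convex, then for every edge in the cut-set with endpoint x in V0 and y in V1, every vertex of V0 is at least as close to x as to y, i.e., V0 ⊆ W_{x,y} ∪ {w : d(w,x) = d(w,y)}. -/

import Mathlib

/-- `(V0, V1)` is a cut of the graph `G`: a partition of the vertex set into
two nonempty parts. -/
def IsCut {V : Type*} (V0 V1 : Set V) : Prop :=
  V0.Nonempty ∧ V1.Nonempty ∧ V0 ∪ V1 = Set.univ ∧ Disjoint V0 V1

/-- The cut `(V0, V1)` is convex: no shortest path between two vertices of
one side passes through the other side. -/
def IsConvexCut {V : Type*} (G : SimpleGraph V) (V0 V1 : Set V) : Prop :=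
  IsCut V0 V1 ∧
  (∀ u v : V, u ∈ V0 → v ∈ V0 → ∀ p : G.Walk u v,
      p.length = G.dist u v → ∀ w ∈ p.support, w ∈ V0) ∧
  (∀ u v : V, u ∈ V1 → v ∈ V1 → ∀ p : G.Walk u v,
      p.length = G.dist u v → ∀ w ∈ p.support, w ∈ V1)

/-- For a convex cut `(V0, V1)` of a connected graph and a cut-set edge with
endpoint `x ∈ V0` and `y ∈ V1`, every vertex of `V0` is at least as close to
`x` as to `y`: `V0 ⊆ W_{x,y} ∪ {w : d(w,x) = d(w,y)}`. -/
theorem convexCut_subset_W {V : Type*} (G : SimpleGraph V)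
    (hconn : G.Connected) (V0 V1 : Set V) (hcvx : IsConvexCut G V0 V1)
    (x y : V) (hx : x ∈ V0) (hy : y ∈ V1) (hxy : G.Adj x y) :
    V0 ⊆ {w : V | G.dist w x < G.dist w y} ∪
      {w : V | G.dist w x = G.dist w y} := by
  intro w hw
  rcases lt_trichotomy (G.dist w x) (G.dist w y) with h | h | h
  · exact Or.inl h
  · exact Or.inr h
  · exfalso
    -- then d(w,x) = d(w,y) + 1 and a shortest w-x walk passes through y
    have htri : G.dist w x ≤ G.dist w y + 1 := by
      have := hconn.dist_triangle (u := w) (v := y) (w := x)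
      have h1 : G.dist y x = 1 := by
        rw [SimpleGraph.dist_eq_one_iff_adj]
        exact hxy.symm
      omega
    have hdx : G.dist w x = G.dist w y + 1 := by omega
    obtain ⟨p, hp⟩ := hconn.exists_walk_length_eq_dist w y
    have hq : (p.concat hxy.symm).length = G.dist w x := by
      rw [SimpleGraph.Walk.length_concat, hp, hdx]
    have hy0 : y ∈ V0 := by
      refine hcvx.2.1 w x hw hx (p.concat hxy.symm) hq y ?_
      rw [SimpleGraph.Walk.support_concat]
      exact List.mem_append_left _ p.end_mem_support
    exact (hcvx.1.2.2.2.le_bot ⟨hy0, hy⟩)
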